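/- Let A ∈ ℂ^{m×d} with [Re(A); Im(A)] ∈ ℝ^{2m×d} of full column rank d, and let x ∈ ℝ^d be nonzero. Define D_{A,ℝ}(x) = [[Re A, Re(dg(Ax))], [Im A, Im(dg(Ax))]] ∈ ℝ^{2m×(m+d)}. Then x ∈ W_{A,ℝ} if and only if rank(D_{A,ℝ}(x)) = d + |N(Ax)| - 1, where W_{A,ℝ} = {x ∈ ℝ^d : for all y ∈ ℝ^d, sign(Ay) = sign(Ax) implies y = t·x for some t > 0}. -/

import Mathlib

attribute [local instance] Classical.propDecidable

noncomputable def csign (z : ℂ) : ℂ := if z = 0 then 0 else z / ((‖z‖ : ℝ) : ℂ)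

/-- Real signals recoverable (up to positive scaling) from the phases of `Ax`. -/
def WsetR {m d : ℕ} (A : Matrix (Fin m) (Fin d) ℂ) : Set (Fin d → ℝ) :=
  {x | ∀ y : Fin d → ℝ,
    (∀ j, csign (A.mulVec (fun k => (y k : ℂ)) j) = csign (A.mulVec (fun k => (x k : ℂ)) j)) →
      ∃ t : ℝ, 0 < t ∧ y = t • x}

/-- The real discriminant matrix `D_{A,ℝ}(x) = [[Re A, Re(dg(Ax))], [Im A, Im(dg(Ax))]]`. -/
noncomputable def discDR {m d : ℕ} (A : Matrix (Fin m) (Fin d) ℂ) (x : Fin d → ℝ) :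
    Matrix (Fin m ⊕ Fin m) (Fin d ⊕ Fin m) ℝ :=
  Matrix.fromBlocks
    (A.map Complex.re) (Matrix.diagonal fun j => (A.mulVec (fun k => (x k : ℂ)) j).re)
    (A.map Complex.im) (Matrix.diagonal fun j => (A.mulVec (fun k => (x k : ℂ)) j).im)

namespace Stmt19Aux

open Matrix Complex

lemma csign_eq_zero_iff (z : ℂ) : csign z = 0 ↔ z = 0 := by
  unfold csign
  split
  · simp_all
  · rename_i h
    simp only [div_eq_zero_iff, Complex.ofReal_eq_zero, norm_eq_zero]
    tauto

lemma csign_pos_mul (c : ℝ) (hc : 0 < c) (z : ℂ) : csign ((c : ℂ) * z) = csign z := by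
  by_cases hz : z = 0
  · simp [csign, hz]
  · have hcz : (c : ℂ) * z ≠ 0 := by
      refine mul_ne_zero ?_ hz
      simpa using hc.ne'
    unfold csign
    rw [if_neg hcz, if_neg hz, norm_mul, Complex.norm_real, Real.norm_eq_abs, abs_of_pos hc,
      Complex.ofReal_mul, mul_div_mul_left _ _ (by simpa using hc.ne' : (c : ℂ) ≠ 0)]

lemma eq_pos_smul_of_csign_eq {z w : ℂ} (hw : w ≠ 0) (h : csign z = csign w) :
    ∃ t : ℝ, 0 < t ∧ z = (t : ℝ) * w := by
  have hz : z ≠ 0 := by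
    intro h0
    rw [h0] at h
    exact hw ((csign_eq_zero_iff w).1 (h ▸ (by simp [csign] : csign (0:ℂ) = 0)).symm.symm)
  refine ⟨‖z‖ / ‖w‖, div_pos (norm_pos_iff.mpr hz) (norm_pos_iff.mpr hw), ?_⟩
  unfold csign at h
  rw [if_neg hz, if_neg hw] at h
  have haz : ((‖z‖ : ℝ) : ℂ) ≠ 0 := by simpa using (norm_pos_iff.mpr hz).ne'
  have haw : ((‖w‖ : ℝ) : ℂ) ≠ 0 := by simpa using (norm_pos_iff.mpr hw).ne'
  have h' : z * ((‖w‖ : ℝ) : ℂ) = w * ((‖z‖ : ℝ) : ℂ) := by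
    field_simp at h
    linear_combination h
  push_cast
  field_simp
  linear_combination h'

variable {m d : ℕ}

lemma re_mulVec (A : Matrix (Fin m) (Fin d) ℂ) (y : Fin d → ℝ) (j : Fin m) :
    ((A.mulVec fun k => (y k : ℂ)) j).re = (A.map Complex.re).mulVec y j := by
  simp [Matrix.mulVec, dotProduct, Complex.re_sum, Complex.mul_re]

lemma im_mulVec (A : Matrix (Fin m) (Fin d) ℂ) (y : Fin d → ℝ) (j : Fin m) :
    ((A.mulVec fun k => (y k : ℂ)) j).im = (A.map Complex.im).mulVec y j := by
  simp [Matrix.mulVec, dotProduct, Complex.im_sum, Complex.mul_im]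

lemma mulVec_coe_add (A : Matrix (Fin m) (Fin d) ℂ) (y z : Fin d → ℝ) (j : Fin m) :
    A.mulVec (fun k => ((y k + z k : ℝ) : ℂ)) j
      = A.mulVec (fun k => (y k : ℂ)) j + A.mulVec (fun k => (z k : ℂ)) j := by
  simp only [Matrix.mulVec, dotProduct, ← Finset.sum_add_distrib]
  apply Finset.sum_congr rfl
  intro k _
  push_cast
  ring

lemma mulVec_coe_smul (A : Matrix (Fin m) (Fin d) ℂ) (c : ℝ) (y : Fin d → ℝ) (j : Fin m) :
    A.mulVec (fun k => ((c * y k : ℝ) : ℂ)) j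
      = (c : ℂ) * A.mulVec (fun k => (y k : ℂ)) j := by
  simp only [Matrix.mulVec, dotProduct, Finset.mul_sum]
  apply Finset.sum_congr rfl
  intro k _
  push_cast
  ring

lemma sum_single_apply {p : Fin m → Prop} [DecidablePred p] [Fintype {j // p j}]
    (c : {j // p j} → ℝ) (j : Fin m) :
    (∑ i : {j // p j}, c i * (Pi.single (i : Fin m) (1 : ℝ) : Fin m → ℝ) j)
      = if h : p j then c ⟨j, h⟩ else 0 := by
  split
  · rename_i h
    rw [Finset.sum_eq_single (⟨j, h⟩ : {j // p j})]
    · simp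
    · intro i _ hij
      have hne : j ≠ (i : Fin m) := fun he => hij (Subtype.ext he.symm)
      simp [Pi.single_apply, hne]
    · simp
  · rename_i h
    apply Finset.sum_eq_zero
    intro i _
    have hne : j ≠ (i : Fin m) := fun he => h (he ▸ i.2)
    simp [Pi.single_apply, hne]

end Stmt19Aux

open Stmt19Aux Matrix

theorem stmt_19 (m d : ℕ) (A : Matrix (Fin m) (Fin d) ℂ)
    (hA : (Matrix.fromRows (A.map Complex.re) (A.map Complex.im)).rank = d)
    (x : Fin d → ℝ) (hx : x ≠ 0) :
    x ∈ WsetR A ↔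
      (discDR A x).rank =
        d + Fintype.card {j : Fin m // A.mulVec (fun k => (x k : ℂ)) j ≠ 0} - 1 := by
  classical
  set u : Fin m → ℂ := A.mulVec (fun k => (x k : ℂ)) with hu
  -- kernel characterization
  have hker : ∀ v : Fin d ⊕ Fin m → ℝ,
      v ∈ LinearMap.ker (discDR A x).mulVecLin ↔
        ∀ j, A.mulVec (fun k => ((v (Sum.inl k) : ℝ) : ℂ)) j + (v (Sum.inr j) : ℂ) * u j = 0 := by
    intro v
    rw [LinearMap.mem_ker, Matrix.mulVecLin_apply, discDR, Matrix.fromBlocks_mulVec]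
    constructor
    · intro h j
      have h1 := congrFun h (Sum.inl j)
      have h2 := congrFun h (Sum.inr j)
      simp only [Sum.elim_inl, Sum.elim_inr, Pi.add_apply, Matrix.mulVec_diagonal,
        Pi.zero_apply, Function.comp_def, re_mulVec, im_mulVec] at h1 h2
      apply Complex.ext
      · simp only [Complex.add_re, Complex.mul_re, Complex.ofReal_re, Complex.ofReal_im,
          re_mulVec, im_mulVec, hu, Complex.zero_re, zero_mul, sub_zero]
        linear_combination h1
      · simp only [Complex.add_im, Complex.mul_im, Complex.ofReal_re, Complex.ofReal_im,
          re_mulVec, im_mulVec, hu, Complex.zero_im, zero_mul, add_zero]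
        linear_combination h2
    · intro h
      funext i
      cases i with
      | inl j =>
        have h1 := congrArg Complex.re (h j)
        simp only [Complex.add_re, Complex.mul_re, Complex.ofReal_re, Complex.ofReal_im,
          re_mulVec, im_mulVec, hu, Complex.zero_re, zero_mul, sub_zero] at h1
        simp only [Sum.elim_inl, Pi.add_apply, Matrix.mulVec_diagonal, Pi.zero_apply,
          Function.comp_def, re_mulVec, im_mulVec]
        linear_combination h1
      | inr j =>
        have h2 := congrArg Complex.im (h j)
        simp only [Complex.add_im, Complex.mul_im, Complex.ofReal_re, Complex.ofReal_im,
          re_mulVec, im_mulVec, hu, Complex.zero_im, zero_mul, add_zero] at h2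
        simp only [Sum.elim_inr, Pi.add_apply, Matrix.mulVec_diagonal, Pi.zero_apply,
          Function.comp_def, re_mulVec, im_mulVec]
        linear_combination h2
  -- the canonical kernel vectors
  set b : (Unit ⊕ {j : Fin m // u j = 0}) → (Fin d ⊕ Fin m → ℝ) :=
    Sum.elim (fun _ => Sum.elim x (fun _ => (-1 : ℝ)))
      (fun j => Sum.elim 0 (Pi.single (j : Fin m) 1)) with hb_def
  set S : Submodule ℝ (Fin d ⊕ Fin m → ℝ) := Submodule.span ℝ (Set.range b) with hS
  set K : Submodule ℝ (Fin d ⊕ Fin m → ℝ) := LinearMap.ker (discDR A x).mulVecLin with hK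
  obtain ⟨k0, hk0''⟩ := Function.ne_iff.1 hx
  have hk0 : x k0 ≠ 0 := by simpa using hk0''
  -- b is linearly independent
  have hb : LinearIndependent ℝ b := by
    rw [Fintype.linearIndependent_iff]
    intro g hg
    have h0 : g (Sum.inl ()) = 0 := by
      have := congrFun hg (Sum.inl k0)
      simp only [Finset.sum_apply, Pi.smul_apply, Fintype.sum_sum_type, hb_def,
        Sum.elim_inl, Sum.elim_inr, Pi.zero_apply, smul_eq_mul, mul_zero,
        Finset.sum_const_zero, add_zero, Pi.zero_apply] at this
      simp only [Finset.univ_unique, Finset.sum_singleton] at this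
      exact (mul_eq_zero.1 this).resolve_right hk0
    intro i
    cases i with
    | inl _ => simpa using h0
    | inr j =>
      have := congrFun hg (Sum.inr (j : Fin m))
      simp only [Finset.sum_apply, Pi.smul_apply, Fintype.sum_sum_type, hb_def,
        Sum.elim_inl, Sum.elim_inr, smul_eq_mul, Pi.zero_apply,
        Finset.univ_unique, Finset.sum_singleton, h0, zero_mul, zero_add] at this
      rw [sum_single_apply (fun i => g (Sum.inr i)) (j : Fin m)] at this
      rw [dif_pos j.2] at this
      simpa using this
  -- S ≤ K
  have hSK : S ≤ K := by
    rw [hS, Submodule.span_le]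
    rintro _ ⟨i, rfl⟩
    rw [SetLike.mem_coe, hK, hker]
    intro j
    cases i with
    | inl _ =>
      simp only [hb_def, Sum.elim_inl, Sum.elim_inr]
      push_cast
      rw [hu]
      ring
    | inr j0 =>
      simp only [hb_def, Sum.elim_inl, Sum.elim_inr, Pi.zero_apply]
      have hz : A.mulVec (fun k => ((0 : ℝ) : ℂ)) j = 0 := by
        have : (fun _ : Fin d => ((0 : ℝ) : ℂ)) = 0 := by funext k; simp
        rw [this, Matrix.mulVec_zero]
        simp
      rw [hz, zero_add]
      by_cases hjj : j = (j0 : Fin m)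
      · subst hjj
        simp [j0.2]
      · simp [Pi.single_apply, hjj]
  -- existence of j with u j ≠ 0
  have hu0 : ∃ j, u j ≠ 0 := by
    by_contra hcon
    push_neg at hcon
    set B := Matrix.fromRows (A.map Complex.re) (A.map Complex.im) with hB
    have hrn := LinearMap.finrank_range_add_finrank_ker B.mulVecLin
    rw [Module.finrank_fintype_fun_eq_card, Fintype.card_fin] at hrn
    have hrank : B.rank = Module.finrank ℝ (LinearMap.range B.mulVecLin) := rfl
    rw [← hrank, hA] at hrn
    have hkz : Module.finrank ℝ (LinearMap.ker B.mulVecLin) = 0 := by omega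
    have hbot : LinearMap.ker B.mulVecLin = ⊥ := Submodule.finrank_eq_zero.1 hkz
    have hxk : x ∈ LinearMap.ker B.mulVecLin := by
      rw [LinearMap.mem_ker, Matrix.mulVecLin_apply, hB, Matrix.fromRows_mulVec]
      funext i
      cases i with
      | inl j =>
        have h1 : (A.map Complex.re).mulVec x j = 0 := by
          rw [← re_mulVec, ← hu, hcon j, Complex.zero_re]
        simpa using h1
      | inr j =>
        have h1 : (A.map Complex.im).mulVec x j = 0 := by
          rw [← im_mulVec, ← hu, hcon j, Complex.zero_im]
        simpa using h1
    rw [hbot, Submodule.mem_bot] at hxk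
    exact hx hxk
  -- W implies K ≤ S
  have hW1 : x ∈ WsetR A → K ≤ S := by
    intro hW v hv
    set y : Fin d → ℝ := fun k => v (Sum.inl k) with hy
    set s : Fin m → ℝ := fun j => v (Sum.inr j) with hs
    have hv' : ∀ j, A.mulVec (fun k => (y k : ℂ)) j = -((s j : ℂ) * u j) := by
      intro j
      have := (hker v).1 hv j
      rw [eq_neg_iff_add_eq_zero]
      exact this
    set M : ℝ := ∑ j, |s j| with hM
    have hM0 : 0 ≤ M := Finset.sum_nonneg fun j _ => abs_nonneg _
    have hMj : ∀ j, |s j| ≤ M := fun j =>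
      Finset.single_le_sum (fun i _ => abs_nonneg (s i)) (Finset.mem_univ j)
    set ε : ℝ := 1 / (M + 1) with hε
    have hε0 : 0 < ε := by positivity
    have hεs : ∀ j, 0 < 1 - ε * s j := by
      intro j
      have h1 : ε * s j ≤ ε * M := by
        apply mul_le_mul_of_nonneg_left _ hε0.le
        exact le_trans (le_abs_self _) (hMj j)
      have h2 : ε * M < 1 := by
        rw [hε]
        rw [div_mul_eq_mul_div, one_mul, div_lt_one (by linarith)]
        linarith
      linarith
    have hsign : ∀ j, csign (A.mulVec (fun k => ((x + ε • y) k : ℂ)) j) = csign (u j) := by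
      intro j
      have hcoe : (fun k => (((x + ε • y) k : ℝ) : ℂ)) = fun k => ((x k + ε * y k : ℝ) : ℂ) := by
        funext k; simp
      rw [hcoe, mulVec_coe_add A x (fun k => ε * y k) j]
      have : A.mulVec (fun k => ((ε * y k : ℝ) : ℂ)) j = (ε : ℂ) * A.mulVec (fun k => (y k : ℂ)) j :=
        mulVec_coe_smul A ε y j
      rw [this, hv' j, ← hu]
      have : u j + (ε : ℂ) * -((s j : ℂ) * u j) = ((1 - ε * s j : ℝ) : ℂ) * u j := by
        push_cast
        ring
      rw [this]
      exact csign_pos_mul _ (hεs j) _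
    obtain ⟨t, ht, hts⟩ := hW (x + ε • y) hsign
    set c : ℝ := (t - 1) / ε with hc
    have hyc : ∀ k, y k = c * x k := by
      intro k
      have := congrFun hts k
      simp only [Pi.add_apply, Pi.smul_apply, smul_eq_mul] at this
      rw [hc]
      field_simp
      linarith
    have hsc : ∀ j, u j ≠ 0 → s j = -c := by
      intro j hj
      have h1 : A.mulVec (fun k => (y k : ℂ)) j = (c : ℂ) * u j := by
        have hcoe : (fun k => ((y k : ℝ) : ℂ)) = fun k => ((c * x k : ℝ) : ℂ) := by
          funext k; rw [hyc k]
        rw [hcoe, mulVec_coe_smul, ← hu]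
      have h2 := hv' j
      rw [h1] at h2
      have h3 : ((c + s j : ℝ) : ℂ) * u j = 0 := by
        push_cast
        linear_combination h2
      have h4 : ((c + s j : ℝ) : ℂ) = 0 := (mul_eq_zero.1 h3).resolve_right hj
      have h5 : c + s j = 0 := by exact_mod_cast h4
      linarith
    have hvrep : v = c • b (Sum.inl ()) +
        ∑ j : {j : Fin m // u j = 0}, (s (j : Fin m) + c) • b (Sum.inr j) := by
      funext i
      simp only [Pi.add_apply, Pi.smul_apply, Finset.sum_apply, smul_eq_mul, hb_def]
      cases i with
      | inl k =>
        simp only [Sum.elim_inl, Sum.elim_inr, Pi.zero_apply, mul_zero,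
          Finset.sum_const_zero, add_zero]
        exact hyc k
      | inr j =>
        simp only [Sum.elim_inl, Sum.elim_inr]
        rw [sum_single_apply (fun i : {j : Fin m // u j = 0} => s (i : Fin m) + c) j]
        by_cases hj : u j = 0
        · rw [dif_pos hj, show v (Sum.inr j) = s j from rfl]
          ring
        · rw [dif_neg hj, show v (Sum.inr j) = s j from rfl, hsc j hj]
          ring
    rw [hvrep]
    refine S.add_mem (S.smul_mem _ (Submodule.subset_span ⟨Sum.inl (), rfl⟩)) ?_
    exact Submodule.sum_mem _ fun j _ => S.smul_mem _ (Submodule.subset_span ⟨Sum.inr j, rfl⟩)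
  -- K ≤ S implies W
  have hW2 : K ≤ S → x ∈ WsetR A := by
    intro hKS y hy
    have hAy : ∀ j, ∃ t : ℝ, 0 < t ∧ A.mulVec (fun k => (y k : ℂ)) j = (t : ℝ) * u j := by
      intro j
      by_cases hj : u j = 0
      · refine ⟨1, one_pos, ?_⟩
        have h0 : csign (A.mulVec (fun k => (y k : ℂ)) j) = 0 := by
          rw [hy j, ← hu, hj]
          simp [csign]
        rw [(csign_eq_zero_iff _).1 h0, hj]
        simp
      · exact eq_pos_smul_of_csign_eq hj (by rw [hy j, hu])
    choose t ht hty using hAy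
    set v : Fin d ⊕ Fin m → ℝ := Sum.elim y (fun j => -t j) with hv
    have hvK : v ∈ K := by
      rw [hK, hker]
      intro j
      simp only [hv, Sum.elim_inl, Sum.elim_inr]
      rw [hty j]
      push_cast
      ring
    have hvS := hKS hvK
    rw [hS, Submodule.mem_span_range_iff_exists_fun] at hvS
    obtain ⟨g, hg⟩ := hvS
    obtain ⟨j0, hj0⟩ := hu0
    have hc0 : g (Sum.inl ()) = t j0 := by
      have := congrFun hg (Sum.inr j0)
      simp only [Finset.sum_apply, Pi.smul_apply, Fintype.sum_sum_type, hb_def,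
        Sum.elim_inl, Sum.elim_inr, smul_eq_mul,
        Finset.univ_unique, Finset.sum_singleton, hv] at this
      rw [sum_single_apply (fun i : {j : Fin m // u j = 0} => g (Sum.inr i)) j0,
        dif_neg hj0] at this
      have h2 : g (Sum.inl ()) * (-1) + 0 = -t j0 := this
      linarith
    refine ⟨t j0, ht j0, ?_⟩
    funext k
    have := congrFun hg (Sum.inl k)
    simp only [Finset.sum_apply, Pi.smul_apply, Fintype.sum_sum_type, hb_def,
      Sum.elim_inl, Sum.elim_inr, smul_eq_mul, Pi.zero_apply, mul_zero,
      Finset.sum_const_zero, add_zero,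
      Finset.univ_unique, Finset.sum_singleton, hv] at this
    rw [hc0] at this
    simpa [Pi.smul_apply, smul_eq_mul] using this.symm
  -- dimension counting
  set n : ℕ := Fintype.card {j : Fin m // u j ≠ 0} with hn
  set n0 : ℕ := Fintype.card {j : Fin m // u j = 0} with hn0
  have hcompl : n = m - n0 := by
    rw [hn, hn0]
    have := Fintype.card_subtype_compl (fun j : Fin m => u j = 0)
    simp only [Fintype.card_fin] at this
    convert this using 2
  have hn0le : n0 ≤ m := by
    rw [hn0]
    have := Fintype.card_subtype_le (fun j : Fin m => u j = 0)
    simpa using this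
  have hn1 : 1 ≤ n := by
    rw [hn]
    obtain ⟨j, hj⟩ := hu0
    exact Fintype.card_pos_iff.2 ⟨⟨j, hj⟩⟩
  have hfinS : Module.finrank ℝ S = 1 + n0 := by
    rw [hS, finrank_span_eq_card hb, Fintype.card_sum, hn0]
    simp
  have hrn : (discDR A x).rank + Module.finrank ℝ K = d + m := by
    have := LinearMap.finrank_range_add_finrank_ker (discDR A x).mulVecLin
    rw [Module.finrank_fintype_fun_eq_card, Fintype.card_sum, Fintype.card_fin,
      Fintype.card_fin] at this
    exact this
  have hgoal : (d + Fintype.card {j : Fin m // A.mulVec (fun k => (x k : ℂ)) j ≠ 0} - 1)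
      = d + n - 1 := rfl
  constructor
  · intro hW
    have hKS := hW1 hW
    have hKeq : K = S := le_antisymm hKS hSK
    have : Module.finrank ℝ K = 1 + n0 := by rw [hKeq, hfinS]
    omega
  · intro hr
    have hfinK : Module.finrank ℝ K = 1 + n0 := by omega
    have hKeq : S = K := Submodule.eq_of_le_of_finrank_le hSK (by rw [hfinK, hfinS])
    exact hW2 (le_of_eq hKeq.symm)
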